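/- arXiv:2002.04134 — 3 statements merged into one kernel-verified Lean document; each statement's English description precedes it below -/
import Mathlib

section
/- Let K be an algebraically closed field of characteristic different from 2 and 5, let e ∈ K satisfy e² + e = 1, and set ē = −1 − e. For every a ∈ K there exist ρ₁, ρ₂, ρ₃, ρ₄ ∈ K such that x⁴ + a·x³ + (11a+2)·x² − a·x + 1 = (x−ρ₁)(x−ρ₂)(x−ρ₃)(x−ρ₄) in K[x], and moreover ρ₁·ρ₃ = −1, ρ₂·ρ₄ = −1, ρ₁+ρ₄ = e⁵·(1−ρ₁ρ₄), ρ₂+ρ₃ = e⁵·(1−ρ₂ρ₃), ρ₁+ρ₂ = ē⁵·(1−ρ₁ρ₂), and ρ₃+ρ₄ = ē⁵·(1−ρ₃ρ₄). -/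
open Polynomial

/-- Lemma 3.1 of Morton's paper and its consequences: over an algebraically closed field of
characteristic `≠ 2, 5`, the quartic `x⁴ + ax³ + (11a+2)x² − ax + 1` factors into linear
factors whose roots pair up under `ρ ↦ −1/ρ` and combine into two quadratics `x² + rx + s`
with `r = e⁵(s−1)` and two with `r = ē⁵(s−1)`, where `e, ē = −1−e` are the roots of
`e² + e = 1`. -/
theorem quartic_roots_pairing
    (K : Type) [Field K] [IsAlgClosed K]
    (h2 : (2 : K) ≠ 0) (h5 : (5 : K) ≠ 0)
    (e : K) (he : e ^ 2 + e = 1) (a : K) :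
    ∃ ρ₁ ρ₂ ρ₃ ρ₄ : K,
      (X ^ 4 + C a * X ^ 3 + C (11 * a + 2) * X ^ 2 - C a * X + 1 : Polynomial K) =
        (X - C ρ₁) * (X - C ρ₂) * (X - C ρ₃) * (X - C ρ₄) ∧
      ρ₁ * ρ₃ = -1 ∧
      ρ₂ * ρ₄ = -1 ∧
      ρ₁ + ρ₄ = e ^ 5 * (1 - ρ₁ * ρ₄) ∧
      ρ₂ + ρ₃ = e ^ 5 * (1 - ρ₂ * ρ₃) ∧
      ρ₁ + ρ₂ = (-1 - e) ^ 5 * (1 - ρ₁ * ρ₂) ∧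
      ρ₃ + ρ₄ = (-1 - e) ^ 5 * (1 - ρ₃ * ρ₄) := by
  have he0 : e ≠ 0 := by
    rintro rfl
    simp at he
  set b : K := e ^ 5 with hbdef
  have hbne : b ≠ 0 := pow_ne_zero _ he0
  have hb5 : b = 5 * e - 3 := by
    rw [hbdef]; linear_combination (e^3 - e^2 + 2*e - 3) * he
  have hb2 : b ^ 2 + 11 * b = 1 := by
    rw [hb5]; linear_combination 25 * he
  have hbb : b * (-1 - e) ^ 5 = -1 := by
    have h : e * (-1 - e) = -1 := by linear_combination -he
    calc b * (-1-e)^5 = (e * (-1-e))^5 := by rw [hbdef]; ring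
      _ = (-1:K)^5 := by rw [h]
      _ = -1 := by norm_num
  -- find s with b*s^2 - (2*b+a)*s + b = 0
  obtain ⟨d, hd⟩ := IsAlgClosed.exists_pow_nat_eq ((2*b+a)^2 - 4*b^2) (n := 2) (by norm_num)
  set s : K := ((2*b+a) + d) / (2*b) with hsdef
  have h2b : (2:K)*b ≠ 0 := mul_ne_zero h2 hbne
  have hq : b*s^2 - (2*b+a)*s + b = 0 := by
    rw [hsdef]; field_simp
    rw [hbdef] at hd
    linear_combination hd
  clear_value s
  clear hd hsdef
  have hsne : s ≠ 0 := by
    intro h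
    rw [h] at hq
    simp [hbne] at hq
  have hs' : b * (1 - s) ^ 2 = a * s := by linear_combination hq
  obtain ⟨D, hD⟩ := IsAlgClosed.exists_pow_nat_eq ((b*(1-s))^2 - 4*s) (n := 2) (by norm_num)
  refine ⟨(b*(1-s) + D)/2, -((b*(1-s) - D)/2)⁻¹, -((b*(1-s) + D)/2)⁻¹, (b*(1-s) - D)/2, ?_⟩
  set P : K := (b*(1-s) + D)/2 with hPdef
  set Q : K := (b*(1-s) - D)/2 with hQdef
  have hsum : P + Q = b * (1 - s) := by rw [hPdef, hQdef]; field_simp; ring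
  have hprod : P * Q = s := by
    rw [hPdef, hQdef]
    field_simp
    linear_combination -hD
  have hPne : P ≠ 0 := by
    intro h; rw [h, zero_mul] at hprod; exact hsne hprod.symm
  have hQne : Q ≠ 0 := by
    intro h; rw [h, mul_zero] at hprod; exact hsne hprod.symm
  clear_value P Q
  clear hD hPdef hQdef hq
  refine ⟨?_, ?_, ?_, ?_, ?_, ?_, ?_⟩
  · -- polynomial identity
    have e1 : P + -Q⁻¹ + -P⁻¹ + Q = -a := by
      field_simp
      linear_combination (P*Q - 1) * hsum + (b*(1-s) + a) * hprod - hs'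
    have e2 : P * -Q⁻¹ + P * -P⁻¹ + P * Q + -Q⁻¹ * -P⁻¹ + -Q⁻¹ * Q + -P⁻¹ * Q
        = 11 * a + 2 := by
      field_simp
      linear_combination (P*Q + s - 11*a - 2) * hprod - (P + Q + b*(1-s)) * hsum + 11 * hs' - (1-s)^2 * hb2
    have e3 : P * -Q⁻¹ * -P⁻¹ + P * -Q⁻¹ * Q + P * -P⁻¹ * Q + -Q⁻¹ * -P⁻¹ * Q = a := by
      field_simp
      linear_combination (1 - P*Q) * hsum - (b*(1-s) + a) * hprod + hs'
    have e4 : P * -Q⁻¹ * -P⁻¹ * Q = 1 := by field_simp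
    have expand : (X - C P) * (X - C (-Q⁻¹)) * (X - C (-P⁻¹)) * (X - C Q)
        = X ^ 4 - C (P + -Q⁻¹ + -P⁻¹ + Q) * X ^ 3
          + C (P * -Q⁻¹ + P * -P⁻¹ + P * Q + -Q⁻¹ * -P⁻¹ + -Q⁻¹ * Q + -P⁻¹ * Q) * X ^ 2
          - C (P * -Q⁻¹ * -P⁻¹ + P * -Q⁻¹ * Q + P * -P⁻¹ * Q + -Q⁻¹ * -P⁻¹ * Q) * X
          + C (P * -Q⁻¹ * -P⁻¹ * Q) := by
      simp only [map_add, map_mul, map_neg]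
      ring
    rw [expand, e1, e2, e3, e4, map_neg, map_one]
    ring
  · field_simp
  · field_simp
  · linear_combination hsum + e^5 * hprod
  · have h1 : (1+e)*e = 1 := by linear_combination he
    have hc : (1+e)^5 * b = 1 := by
      calc (1+e)^5 * b = ((1+e)*e)^5 := by rw [hbdef]; ring
        _ = 1 := by rw [h1]; norm_num
    have hinv : (1+e)^5*(P+Q) + s - 1 = 0 := by
      linear_combination (1+e)^5 * hsum + (1-s) * hc
    field_simp
    linear_combination -hsum - e^5 * hprod
  · have h1 : (1+e)*e = 1 := by linear_combination he
    have hc : (1+e)^5 * b = 1 := by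
      calc (1+e)^5 * b = ((1+e)*e)^5 := by rw [hbdef]; ring
        _ = 1 := by rw [h1]; norm_num
    have hinv : (1+e)^5*(P+Q) + s - 1 = 0 := by
      linear_combination (1+e)^5 * hsum + (1-s) * hc
    field_simp
    linear_combination hprod + ((-1-e)^5 + 2*(1+e)^5) * hsum - (1 - s) * hbb
  · have h1 : (1+e)*e = 1 := by linear_combination he
    have hc : (1+e)^5 * b = 1 := by
      calc (1+e)^5 * b = ((1+e)*e)^5 := by rw [hbdef]; ring
        _ = 1 := by rw [h1]; norm_num
    have hinv : (1+e)^5*(P+Q) + s - 1 = 0 := by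
      linear_combination (1+e)^5 * hsum + (1-s) * hc
    field_simp
    linear_combination hprod + ((-1-e)^5 + 2*(1+e)^5) * hsum - (1 - s) * hbb
end

section
/- Let ζ = exp(2πi/5) ∈ ℂ and let S and T be the images in PGL₂(ℂ) (the quotient of GL₂(ℂ) by its center) of the invertible matrices [[ζ, 0], [0, 1]] and [[−(1+√5), 2], [2, 1+√5]]. Then the subgroup of PGL₂(ℂ) generated by S and T is isomorphic as a group to the alternating group A₅ on five letters; in particular it has order 60. -/
open Matrix Complex

/-- `PGL₂(ℂ)`: the quotient of `GL₂(ℂ)` by its center. -/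
abbrev PGL2C : Type := GL (Fin 2) ℂ ⧸ Subgroup.center (GL (Fin 2) ℂ)

namespace FrickeIcos

/-- Relators of the (5,2,3) triangle group presentation of `A₅`. -/
def rls : Set (FreeGroup Bool) :=
  {(FreeGroup.of false) ^ 5, (FreeGroup.of true) ^ 2,
    (FreeGroup.of false * FreeGroup.of true) ^ 3}

/-- The presented group `⟨a, b ∣ a⁵ = b² = (ab)³ = 1⟩`. -/
abbrev P : Type := PresentedGroup rls

private def a : P := PresentedGroup.of false
private def b : P := PresentedGroup.of true

private lemma mk_rel {r : FreeGroup Bool} (h : r ∈ rls) : PresentedGroup.mk rls r = 1 :=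
  (QuotientGroup.eq_one_iff _).2 (Subgroup.subset_normalClosure h)

private lemma ha : a ^ 5 = 1 := by
  have h := mk_rel (Set.mem_insert _ _)
  rwa [_root_.map_pow] at h

private lemma hb : b ^ 2 = 1 := by
  have h := mk_rel (show (FreeGroup.of true) ^ 2 ∈ rls from
    Set.mem_insert_of_mem _ (Set.mem_insert _ _))
  rwa [_root_.map_pow] at h

private lemma hab : (a * b) ^ 3 = 1 := by
  have h := mk_rel (show (FreeGroup.of false * FreeGroup.of true) ^ 3 ∈ rls from
    Set.mem_insert_of_mem _ (Set.mem_insert_of_mem _ rfl))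
  rwa [_root_.map_pow, _root_.map_mul] at h

private lemma ha' : a * a * a * a * a = 1 := by rw [← ha]; simp [pow_succ]

private lemma hb' : b * b = 1 := by rw [← hb]; simp [pow_succ]

private lemma h6' : a * b * a * b * a * b = 1 := by rw [← hab]; simp [pow_succ, mul_assoc]

private lemma inva' : a⁻¹ = a * a * a * a :=
  inv_eq_of_mul_eq_one_right (by calc a * (a * a * a * a) = a * a * a * a * a := by group
                                   _ = 1 := ha')

private lemma invb' : b⁻¹ = b := inv_eq_of_mul_eq_one_right hb'

private lemma K3 : a * b * a = b * a * a * a * a * b := by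
  calc a * b * a = (a * b * a * b * a * b) * (b⁻¹ * a⁻¹ * b⁻¹) := by group
    _ = 1 * (b⁻¹ * a⁻¹ * b⁻¹) := congrArg (fun x : P => x * (b⁻¹ * a⁻¹ * b⁻¹)) h6'
    _ = b⁻¹ * a⁻¹ * b⁻¹ := one_mul _
    _ = b * (a * a * a * a) * b := by rw [inva', invb']
    _ = b * a * a * a * a * b := by group

private lemma K4 : b * a * b = a * a * a * a * b * a * a * a * a := by
  calc b * a * b = (b * (a * b * a * b * a * b) * b⁻¹) * (a⁻¹ * b⁻¹ * a⁻¹) := by group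
    _ = (b * 1 * b⁻¹) * (a⁻¹ * b⁻¹ * a⁻¹) :=
        congrArg (fun x : P => (b * x * b⁻¹) * (a⁻¹ * b⁻¹ * a⁻¹)) h6'
    _ = a⁻¹ * b⁻¹ * a⁻¹ := by group
    _ = (a * a * a * a) * b * (a * a * a * a) := by rw [inva', invb']
    _ = a * a * a * a * b * a * a * a * a := by group

private lemma t_b_b : b * b = (1 : P) := by
  calc b * b
    _ = (b * b) := by group
    _ = (1) := congrArg (fun x : P => x) hb'
    _ = (1 : P) := by group

private lemma t_bab_a : b * a * b * a = a * a * a * a * b := by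
  calc b * a * b * a
    _ = b * (a * b * a) := by group
    _ = b * (b * a * a * a * a * b) := congrArg (fun x : P => b * x) K3
    _ = (b * b) * a * a * a * a * b := by group
    _ = (1) * a * a * a * a * b := congrArg (fun x : P => x * a * a * a * a * b) hb'
    _ = a * a * a * a * b := by group

private lemma t_bab_b : b * a * b * b = b * a := by
  calc b * a * b * b
    _ = b * a * (b * b) := by group
    _ = b * a * (1) := congrArg (fun x : P => b * a * x) hb'
    _ = b * a := by group

private lemma t_baaa_a : b * a * a * a * a = a * b * a * b := by
  calc b * a * a * a * a
    _ = (1) * b * a * a * a * a := by group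
    _ = (a * a * a * a * a) * b * a * a * a * a := congrArg (fun x : P => x * b * a * a * a * a) ha'.symm
    _ = a * (a * a * a * a * b * a * a * a * a) := by group
    _ = a * (b * a * b) := congrArg (fun x : P => a * x) K4.symm
    _ = a * b * a * b := by group

private lemma t_baab_a : b * a * a * b * a = a * a * a * a * b * a * a * a * b := by
  calc b * a * a * b * a
    _ = b * a * (a * b * a) := by group
    _ = b * a * (b * a * a * a * a * b) := congrArg (fun x : P => b * a * x) K3
    _ = b * (a * b * a) * a * a * a * b := by group
    _ = b * (b * a * a * a * a * b) * a * a * a * b := congrArg (fun x : P => b * x * a * a * a * b) K3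
    _ = (b * b) * a * a * a * a * b * a * a * a * b := by group
    _ = (1) * a * a * a * a * b * a * a * a * b := congrArg (fun x : P => x * a * a * a * a * b * a * a * a * b) hb'
    _ = a * a * a * a * b * a * a * a * b := by group

private lemma t_baab_b : b * a * a * b * b = b * a * a := by
  calc b * a * a * b * b
    _ = b * a * a * (b * b) := by group
    _ = b * a * a * (1) := congrArg (fun x : P => b * a * a * x) hb'
    _ = b * a * a := by group

private lemma t_baaab_b : b * a * a * a * b * b = b * a * a * a := by
  calc b * a * a * a * b * b
    _ = b * a * a * a * (b * b) := by group
    _ = b * a * a * a * (1) := congrArg (fun x : P => b * a * a * a * x) hb'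
    _ = b * a * a * a := by group

private lemma t_baaabaa_a : b * a * a * a * b * a * a * a = a * b * a * a * a * b * a * b := by
  calc b * a * a * a * b * a * a * a
    _ = (1) * b * a * a * a * b * a * a * a := by group
    _ = (a * a * a * a * a) * b * a * a * a * b * a * a * a := congrArg (fun x : P => x * b * a * a * a * b * a * a * a) ha'.symm
    _ = a * (1) * a * a * a * a * b * a * a * a * b * a * a * a := by group
    _ = a * (b * b) * a * a * a * a * b * a * a * a * b * a * a * a := congrArg (fun x : P => a * x * a * a * a * a * b * a * a * a * b * a * a * a) hb'.symm
    _ = a * b * (b * a * a * a * a * b) * a * a * a * b * a * a * a := by group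
    _ = a * b * (a * b * a) * a * a * a * b * a * a * a := congrArg (fun x : P => a * b * x * a * a * a * b * a * a * a) K3.symm
    _ = a * b * a * b * a * a * a * a * b * a * a * a * (1) := by group
    _ = a * b * a * b * a * a * a * a * b * a * a * a * (b * b) := congrArg (fun x : P => a * b * a * b * a * a * a * a * b * a * a * a * x) hb'.symm
    _ = a * b * a * (b * a * a * a * a * b) * a * a * a * b * b := by group
    _ = a * b * a * (a * b * a) * a * a * a * b * b := congrArg (fun x : P => a * b * a * x * a * a * a * b * b) K3.symm
    _ = a * b * a * a * (b * a * a * a * a * b) * b := by group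
    _ = a * b * a * a * (a * b * a) * b := congrArg (fun x : P => a * b * a * a * x * b) K3.symm
    _ = a * b * a * a * a * b * a * b := by group

private lemma t_baaabab_a : b * a * a * a * b * a * b * a = b * a * a * b := by
  calc b * a * a * a * b * a * b * a
    _ = b * a * a * (a * b * a) * b * a := by group
    _ = b * a * a * (b * a * a * a * a * b) * b * a := congrArg (fun x : P => b * a * a * x * b * a) K3
    _ = b * a * a * b * a * a * a * a * (b * b) * a := by group
    _ = b * a * a * b * a * a * a * a * (1) * a := congrArg (fun x : P => b * a * a * b * a * a * a * a * x * a) hb'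
    _ = b * a * a * b * (a * a * a * a * a) := by group
    _ = b * a * a * b * (1) := congrArg (fun x : P => b * a * a * b * x) ha'
    _ = b * a * a * b := by group

private lemma t_baaabab_b : b * a * a * a * b * a * b * b = b * a * a * a * b * a := by
  calc b * a * a * a * b * a * b * b
    _ = b * a * a * a * b * a * (b * b) := by group
    _ = b * a * a * a * b * a * (1) := congrArg (fun x : P => b * a * a * a * b * a * x) hb'
    _ = b * a * a * a * b * a := by group

private lemma t_baaabaab_a : b * a * a * a * b * a * a * b * a = a * a * a * a * b * a * a * a * b * a * a * b := by
  calc b * a * a * a * b * a * a * b * a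
    _ = b * a * a * (a * b * a) * a * b * a := by group
    _ = b * a * a * (b * a * a * a * a * b) * a * b * a := congrArg (fun x : P => b * a * a * x * a * b * a) K3
    _ = b * a * (a * b * a) * a * a * a * b * a * b * a := by group
    _ = b * a * (b * a * a * a * a * b) * a * a * a * b * a * b * a := congrArg (fun x : P => b * a * x * a * a * a * b * a * b * a) K3
    _ = b * (a * b * a) * a * a * a * b * a * a * a * b * a * b * a := by group
    _ = b * (b * a * a * a * a * b) * a * a * a * b * a * a * a * b * a * b * a := congrArg (fun x : P => b * x * a * a * a * b * a * a * a * b * a * b * a) K3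
    _ = (b * b) * a * a * a * a * b * a * a * a * b * a * a * a * b * a * b * a := by group
    _ = (1) * a * a * a * a * b * a * a * a * b * a * a * a * b * a * b * a := congrArg (fun x : P => x * a * a * a * a * b * a * a * a * b * a * a * a * b * a * b * a) hb'
    _ = a * a * a * a * b * a * a * a * b * a * a * (a * b * a) * b * a := by group
    _ = a * a * a * a * b * a * a * a * b * a * a * (b * a * a * a * a * b) * b * a := congrArg (fun x : P => a * a * a * a * b * a * a * a * b * a * a * x * b * a) K3
    _ = a * a * a * a * b * a * a * a * b * a * a * b * a * a * a * a * (b * b) * a := by group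
    _ = a * a * a * a * b * a * a * a * b * a * a * b * a * a * a * a * (1) * a := congrArg (fun x : P => a * a * a * a * b * a * a * a * b * a * a * b * a * a * a * a * x * a) hb'
    _ = a * a * a * a * b * a * a * a * b * a * a * b * (a * a * a * a * a) := by group
    _ = a * a * a * a * b * a * a * a * b * a * a * b * (1) := congrArg (fun x : P => a * a * a * a * b * a * a * a * b * a * a * b * x) ha'
    _ = a * a * a * a * b * a * a * a * b * a * a * b := by group

private lemma t_baaabaab_b : b * a * a * a * b * a * a * b * b = b * a * a * a * b * a * a := by
  calc b * a * a * a * b * a * a * b * b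
    _ = b * a * a * a * b * a * a * (b * b) := by group
    _ = b * a * a * a * b * a * a * (1) := congrArg (fun x : P => b * a * a * a * b * a * a * x) hb'
    _ = b * a * a * a * b * a * a := by group


private def rep : Fin 12 → P := fun j =>
  match j.val with
  | 0 => 1
  | 1 => b
  | 2 => b * a
  | 3 => b * a * a
  | 4 => b * a * b
  | 5 => b * a * a * a
  | 6 => b * a * a * b
  | 7 => b * a * a * a * b
  | 8 => b * a * a * a * b * a
  | 9 => b * a * a * a * b * a * a
  | 10 => b * a * a * a * b * a * b
  | _ => b * a * a * a * b * a * a * b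

private def F : Fin 5 × Fin 12 → P := fun p => a ^ (p.1 : ℕ) * rep p.2

private def K : Set P := Set.range F

private lemma one_mem_K : (1 : P) ∈ K := ⟨(0, 0), by simp [F, rep]⟩

private lemma amod (n : ℕ) : a ^ n = a ^ (n % 5) := by
  conv_lhs => rw [← Nat.div_add_mod n 5]
  rw [pow_add, pow_mul, ha, one_pow, one_mul]

private lemma memK_of (i m : ℕ) (j : Fin 12) {w g : P} (h : w * g = a ^ m * rep j) :
    a ^ i * w * g ∈ K := by
  have he : a ^ i * w * g = a ^ ((i + m) % 5) * rep j := by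
    rw [mul_assoc, h, ← mul_assoc, ← pow_add, amod]
  exact ⟨(⟨(i + m) % 5, Nat.mod_lt _ (by norm_num)⟩, j), by simp [F]; exact he.symm⟩

private lemma a_mem_Q : ∀ x ∈ K, x * a ∈ K := by
  rintro x ⟨⟨i, j⟩, rfl⟩
  show a ^ (i : ℕ) * rep j * a ∈ K
  fin_cases j
  · exact memK_of i 1 0 (by simp [rep, pow_succ, mul_assoc])
  · exact memK_of i 0 2 (by simp [rep, pow_succ, mul_assoc])
  · exact memK_of i 0 3 (by simp [rep, pow_succ, mul_assoc])
  · exact memK_of i 0 5 (by simp [rep, pow_succ, mul_assoc])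
  · exact memK_of i 4 1 (by simp only [rep]; rw [t_bab_a]; simp [pow_succ, mul_assoc])
  · exact memK_of i 1 4 (by simp only [rep]; rw [t_baaa_a]; simp [pow_succ, mul_assoc])
  · exact memK_of i 4 7 (by simp only [rep]; rw [t_baab_a]; simp [pow_succ, mul_assoc])
  · exact memK_of i 0 8 (by simp [rep, pow_succ, mul_assoc])
  · exact memK_of i 0 9 (by simp [rep, pow_succ, mul_assoc])
  · exact memK_of i 1 10 (by simp only [rep]; rw [t_baaabaa_a]; simp [pow_succ, mul_assoc])
  · exact memK_of i 0 6 (by simp only [rep]; rw [t_baaabab_a]; simp [pow_succ, mul_assoc])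
  · exact memK_of i 4 11 (by simp only [rep]; rw [t_baaabaab_a]; simp [pow_succ, mul_assoc])

private lemma b_mem_Q : ∀ x ∈ K, x * b ∈ K := by
  rintro x ⟨⟨i, j⟩, rfl⟩
  show a ^ (i : ℕ) * rep j * b ∈ K
  fin_cases j
  · exact memK_of i 0 1 (by simp [rep, pow_succ, mul_assoc])
  · exact memK_of i 0 0 (by simp only [rep]; rw [t_b_b]; simp [pow_succ, mul_assoc])
  · exact memK_of i 0 4 (by simp [rep, pow_succ, mul_assoc])
  · exact memK_of i 0 6 (by simp [rep, pow_succ, mul_assoc])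
  · exact memK_of i 0 2 (by simp only [rep]; rw [t_bab_b]; simp [pow_succ, mul_assoc])
  · exact memK_of i 0 7 (by simp [rep, pow_succ, mul_assoc])
  · exact memK_of i 0 3 (by simp only [rep]; rw [t_baab_b]; simp [pow_succ, mul_assoc])
  · exact memK_of i 0 5 (by simp only [rep]; rw [t_baaab_b]; simp [pow_succ, mul_assoc])
  · exact memK_of i 0 10 (by simp [rep, pow_succ, mul_assoc])
  · exact memK_of i 0 11 (by simp [rep, pow_succ, mul_assoc])
  · exact memK_of i 0 8 (by simp only [rep]; rw [t_baaabab_b]; simp [pow_succ, mul_assoc])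
  · exact memK_of i 0 9 (by simp only [rep]; rw [t_baaabaab_b]; simp [pow_succ, mul_assoc])

private def Q : Subgroup P where
  carrier := {g | ∀ x ∈ K, x * g ∈ K}
  one_mem' := fun {x} hx => by simpa using hx
  mul_mem' := by
    intro g h hg hh x hx
    rw [← mul_assoc]
    exact hh _ (hg x hx)
  inv_mem' := by
    intro g hg x hx
    have hK : K.Finite := Set.finite_range F
    have hmt : Set.MapsTo (fun y => y * g) K K := hg
    have hbij := (hK.injOn_iff_bijOn_of_mapsTo hmt).1 ((mul_left_injective g).injOn)
    obtain ⟨y, hy, hyx⟩ := hbij.surjOn hx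
    have : x * g⁻¹ = y := by rw [← hyx]; exact mul_inv_cancel_right y g
    rw [this]; exact hy

private lemma mem_K (g : P) : g ∈ K := by
  have hQ : ∀ g : P, g ∈ Q :=
    PresentedGroup.generated_by rls Q (by
      intro j
      cases j
      · exact a_mem_Q
      · exact b_mem_Q)
  simpa using hQ g 1 one_mem_K

private lemma F_surj : Function.Surjective F := fun g => mem_K g

private lemma finiteP : Finite P := Finite.of_surjective F F_surj

private lemma cardP_le : Nat.card P ≤ 60 := by
  have := Nat.card_le_card_of_surjective F F_surj
  simpa using this
private def σ : Equiv.Perm (Fin 5) := finRotate 5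
private def τ : Equiv.Perm (Fin 5) := Equiv.swap 1 2 * Equiv.swap 3 4

private lemma hσ5 : σ ^ 5 = 1 := by decide
private lemma hτ2 : τ ^ 2 = 1 := by decide
private lemma hστ3 : (σ * τ) ^ 3 = 1 := by decide
private lemma hσne : σ ≠ 1 := by decide
private lemma hτne : τ ≠ 1 := by decide
private lemma hστne : σ * τ ≠ 1 := by decide
private lemma hσA : σ ∈ alternatingGroup (Fin 5) := by
  rw [Equiv.Perm.mem_alternatingGroup]; decide
private lemma hτA : τ ∈ alternatingGroup (Fin 5) := by
  rw [Equiv.Perm.mem_alternatingGroup]; decide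

private lemma cardA5 : Nat.card (alternatingGroup (Fin 5)) = 60 := by
  have h := two_mul_card_alternatingGroup (α := Fin 5)
  have h2 : Fintype.card (Equiv.Perm (Fin 5)) = 120 := by
    rw [Fintype.card_perm, Fintype.card_fin]
    norm_num [Nat.factorial]
  rw [h2] at h
  rw [Nat.card_eq_fintype_card]
  omega

/-- index-two subgroups are normal. -/
private lemma normal_of_index_two {G : Type*} [Group G] {H : Subgroup G} (h : H.index = 2) :
    H.Normal := by
  constructor
  intro x hx g
  have h1 := Subgroup.mul_mem_iff_of_index_two h (a := g * x) (b := g⁻¹)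
  have h2 := Subgroup.mul_mem_iff_of_index_two h (a := g) (b := x)
  simp only [Subgroup.inv_mem_iff] at h1
  tauto

private lemma closure_eq : Subgroup.closure {σ, τ} = alternatingGroup (Fin 5) := by
  set C := Subgroup.closure ({σ, τ} : Set (Equiv.Perm (Fin 5))) with hC
  have hle : C ≤ alternatingGroup (Fin 5) := by
    rw [hC, Subgroup.closure_le]
    rintro x (rfl | rfl)
    · exact hσA
    · exact hτA
  have hσC : σ ∈ C := Subgroup.subset_closure (Set.mem_insert _ _)
  have hτC : τ ∈ C := Subgroup.subset_closure (Set.mem_insert_of_mem _ rfl)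
  have hστC : σ * τ ∈ C := mul_mem hσC hτC
  have hdvd : ∀ (x : Equiv.Perm (Fin 5)) (p : ℕ) (hx : x ∈ C), Fact p.Prime → x ^ p = 1 → x ≠ 1 →
      p ∣ Nat.card C := by
    intro x p hx hp hxp hxne
    have h1 : (⟨x, hx⟩ : C) ^ p = 1 := by
      apply Subtype.ext
      simpa using hxp
    have h2 : (⟨x, hx⟩ : C) ≠ 1 := by
      intro hc
      exact hxne (by simpa using congrArg Subtype.val hc)
    have := orderOf_eq_prime h1 h2
    rw [← this]
    exact orderOf_dvd_natCard _
  haveI : Fact (Nat.Prime 2) := ⟨by norm_num⟩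
  haveI : Fact (Nat.Prime 3) := ⟨by norm_num⟩
  haveI : Fact (Nat.Prime 5) := ⟨by norm_num⟩
  have h5 : 5 ∣ Nat.card C := hdvd σ 5 hσC inferInstance hσ5 hσne
  have h2 : 2 ∣ Nat.card C := hdvd τ 2 hτC inferInstance hτ2 hτne
  have h3 : 3 ∣ Nat.card C := hdvd (σ * τ) 3 hστC inferInstance hστ3 hστne
  have hdvd60 : Nat.card C ∣ 60 := cardA5 ▸ Subgroup.card_dvd_of_le hle
  have hle60 : Nat.card C ≤ 60 := Nat.le_of_dvd (by norm_num) hdvd60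
  have hpos : 0 < Nat.card C := Nat.card_pos
  have h3060 : Nat.card C = 30 ∨ Nat.card C = 60 := by omega
  rcases h3060 with h30 | h60
  · exfalso
    set C' := C.subgroupOf (alternatingGroup (Fin 5)) with hC'
    have hcard' : Nat.card C' = 30 := by
      rw [← h30]
      exact Nat.card_congr (Subgroup.subgroupOfEquivOfLe hle).toEquiv
    have hidx : C'.index = 2 := by
      have := Subgroup.card_mul_index C'
      rw [hcard', cardA5] at this
      omega
    haveI := normal_of_index_two hidx
    haveI := alternatingGroup.isSimpleGroup_five
    rcases IsSimpleGroup.eq_bot_or_eq_top_of_normal C' inferInstance with hbot | htop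
    · rw [hbot, Subgroup.card_bot] at hcard'; omega
    · rw [htop] at hcard'
      rw [Subgroup.card_top, cardA5] at hcard'
      omega
  · exact Subgroup.eq_of_le_of_card_ge hle (by rw [h60, cardA5])


/-! ### Universal property: maps into groups with the (5,2,3) relations -/

private def fhom {G : Type*} [Group G] (S T : G) : Bool → G := fun x => cond x T S

private lemma liftrels {G : Type*} [Group G] (S T : G) (hS5 : S ^ 5 = 1) (hT2 : T ^ 2 = 1)
    (hST3 : (S * T) ^ 3 = 1) :
    ∀ r ∈ rls, FreeGroup.lift (fhom S T) r = 1 := by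
  intro r hr
  simp only [rls, Set.mem_insert_iff, Set.mem_singleton_iff] at hr
  rcases hr with rfl | rfl | rfl
  · rw [_root_.map_pow, FreeGroup.lift_apply_of]; exact hS5
  · rw [_root_.map_pow, FreeGroup.lift_apply_of]; exact hT2
  · rw [_root_.map_pow, _root_.map_mul, FreeGroup.lift_apply_of, FreeGroup.lift_apply_of]; exact hST3

private lemma range_eq {G : Type*} [Group G] (S T : G) (hS5 : S ^ 5 = 1) (hT2 : T ^ 2 = 1)
    (hST3 : (S * T) ^ 3 = 1) :
    (PresentedGroup.toGroup (liftrels S T hS5 hT2 hST3)).range = Subgroup.closure {S, T} := by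
  set φ := PresentedGroup.toGroup (liftrels S T hS5 hT2 hST3) with hφ
  rw [MonoidHom.range_eq_map, ← PresentedGroup.closure_range_of rls, MonoidHom.map_closure]
  congr 1
  rw [← Set.range_comp]
  ext x
  simp only [Set.mem_range, Function.comp_apply, Set.mem_insert_iff, Set.mem_singleton_iff]
  constructor
  · rintro ⟨u, rfl⟩
    cases u
    · left; exact PresentedGroup.toGroup.of _
    · right; exact PresentedGroup.toGroup.of _
  · rintro (rfl | rfl)
    · exact ⟨false, PresentedGroup.toGroup.of _⟩
    · exact ⟨true, PresentedGroup.toGroup.of _⟩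

/-! ### `P ≃* A₅` -/

private def ψ : P →* Equiv.Perm (Fin 5) := PresentedGroup.toGroup (liftrels σ τ hσ5 hτ2 hστ3)

private lemma ψ_mem (x : P) : ψ x ∈ alternatingGroup (Fin 5) := by
  have h : ψ x ∈ ψ.range := ⟨x, rfl⟩
  have hre : ψ.range = Subgroup.closure {σ, τ} := range_eq σ τ hσ5 hτ2 hστ3
  rw [hre, closure_eq] at h
  exact h

private def ψ' : P →* alternatingGroup (Fin 5) :=
  ψ.codRestrict (alternatingGroup (Fin 5)) ψ_mem

private lemma ψ'_surj : Function.Surjective ψ' := by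
  intro y
  have h : (y : Equiv.Perm (Fin 5)) ∈ ψ.range := by
    have hre : ψ.range = Subgroup.closure {σ, τ} := range_eq σ τ hσ5 hτ2 hστ3
    rw [hre, closure_eq]
    exact y.2
  obtain ⟨x, hx⟩ := h
  exact ⟨x, Subtype.ext hx⟩

private lemma cardP : Nat.card P = 60 := by
  haveI : Finite P := finiteP
  refine le_antisymm cardP_le ?_
  have h := Nat.card_le_card_of_surjective ψ' ψ'_surj
  rwa [cardA5] at h

private noncomputable def e : P ≃* alternatingGroup (Fin 5) := by
  haveI : Finite P := finiteP
  exact MulEquiv.ofBijective ψ'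
    ((Nat.bijective_iff_surjective_and_card ψ').2 ⟨ψ'_surj, by rw [cardP, cardA5]⟩)

/-! ### The main glue lemma -/

lemma glue {G : Type*} [Group G] (S T : G) (hS5 : S ^ 5 = 1) (hT2 : T ^ 2 = 1)
    (hST3 : (S * T) ^ 3 = 1) (hSne : S ≠ 1) :
    Nonempty ((Subgroup.closure {S, T} : Subgroup G) ≃* alternatingGroup (Fin 5)) ∧
    Nat.card (Subgroup.closure {S, T} : Subgroup G) = 60 := by
  haveI : Finite P := finiteP
  set φ := PresentedGroup.toGroup (liftrels S T hS5 hT2 hST3) with hφ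
  have hrange : φ.range = Subgroup.closure {S, T} := range_eq S T hS5 hT2 hST3
  have hφa : φ a = S := PresentedGroup.toGroup.of _
  haveI := alternatingGroup.isSimpleGroup_five
  set Nker := (φ.comp e.symm.toMonoidHom).ker with hNker
  have hkermem : ∀ x : P, e x ∈ Nker ↔ φ x = 1 := by
    intro x
    rw [hNker, MonoidHom.mem_ker, MonoidHom.comp_apply]
    simp
  have hkerbot : φ.ker = ⊥ := by
    rcases (MonoidHom.normal_ker _).eq_bot_or_eq_top (H := Nker) with hbot | htop
    · rw [Subgroup.eq_bot_iff_forall]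
      intro x hx
      have h1 : e x ∈ Nker := (hkermem x).2 hx
      rw [hbot, Subgroup.mem_bot] at h1
      have := congrArg e.symm h1
      simpa using this
    · exfalso
      have h1 : e a ∈ Nker := htop ▸ Subgroup.mem_top _
      rw [hkermem a, hφa] at h1
      exact hSne h1
  have hinj : Function.Injective φ := (MonoidHom.ker_eq_bot_iff φ).1 hkerbot
  have iso : (Subgroup.closure {S, T} : Subgroup G) ≃* alternatingGroup (Fin 5) :=
    ((MulEquiv.subgroupCongr hrange).symm.trans (MonoidHom.ofInjective hinj).symm).trans e
  refine ⟨⟨iso⟩, ?_⟩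
  rw [Nat.card_congr iso.toEquiv, cardA5]

end FrickeIcos

namespace FrickeIcosM

private lemma smul_one_fin_two (k : ℂ) :
    k • (1 : Matrix (Fin 2) (Fin 2) ℂ) = !![k, 0; 0, k] := by
  ext i j
  fin_cases i <;> fin_cases j <;> simp [Matrix.one_apply]

private lemma scalar_mem_center (k : ℂ) (M : GL (Fin 2) ℂ)
    (h : (M : Matrix (Fin 2) (Fin 2) ℂ) = k • 1) :
    M ∈ Subgroup.center (GL (Fin 2) ℂ) := by
  rw [Subgroup.mem_center_iff]
  intro g
  apply Units.ext
  rw [Units.val_mul, Units.val_mul, h, Matrix.mul_smul, Matrix.smul_mul,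
    Matrix.mul_one, Matrix.one_mul]

private lemma mk_eq_one_of_scalar (k : ℂ) (M : GL (Fin 2) ℂ)
    (h : (M : Matrix (Fin 2) (Fin 2) ℂ) = k • 1) :
    (QuotientGroup.mk M : PGL2C) = 1 :=
  (QuotientGroup.eq_one_iff _).2 (scalar_mem_center k M h)

end FrickeIcosM

/-- Lemma 6.2(b) of Morton's paper: the subgroup of `PGL₂(ℂ)` generated by the images `S`, `T`
of the matrices `[[ζ,0],[0,1]]` and `[[−(1+√5),2],[2,1+√5]]`, where `ζ = e^{2πi/5}`, is
Fricke's normal form of the icosahedral group: it is isomorphic to the alternating group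
`A₅` and in particular has order 60. -/
theorem fricke_icosahedral_group
    (ζ : ℂ) (hζ : ζ = Complex.exp (2 * Real.pi * Complex.I / 5))
    (MS MT : GL (Fin 2) ℂ)
    (hMS : (MS : Matrix (Fin 2) (Fin 2) ℂ) = !![ζ, 0; 0, 1])
    (hMT : (MT : Matrix (Fin 2) (Fin 2) ℂ) =
      !![-(1 + (Real.sqrt 5 : ℂ)), 2; 2, 1 + (Real.sqrt 5 : ℂ)])
    (S T : PGL2C) (hS : S = QuotientGroup.mk MS) (hT : T = QuotientGroup.mk MT) :
    Nonempty ((Subgroup.closure {S, T} : Subgroup PGL2C) ≃* alternatingGroup (Fin 5)) ∧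
    Nat.card (Subgroup.closure {S, T} : Subgroup PGL2C) = 60 := by
  have hζ' : ζ = Complex.exp ((2 * Real.pi / 5 : ℝ) * Complex.I) := by
    rw [hζ]; congr 1; push_cast; ring
  have hζ5 : ζ ^ 5 = 1 := by
    rw [hζ, ← Complex.exp_nat_mul]
    have h5 : ((5 : ℕ) : ℂ) * (2 * (Real.pi : ℂ) * Complex.I / 5) = 2 * Real.pi * Complex.I := by
      push_cast; ring
    rw [h5, Complex.exp_two_pi_mul_I]
  have hζne : ζ ≠ 1 := by
    intro h
    rw [hζ, Complex.exp_eq_one_iff] at h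
    obtain ⟨n, hn⟩ := h
    have hne : (2 * (Real.pi : ℂ) * Complex.I) ≠ 0 := by
      apply mul_ne_zero (mul_ne_zero _ _) Complex.I_ne_zero
      · norm_num
      · simpa using Real.pi_ne_zero
    have hn' : (1 / 5 : ℂ) * (2 * Real.pi * Complex.I) = (n : ℂ) * (2 * Real.pi * Complex.I) := by
      linear_combination hn
    have h15 : (1 / 5 : ℂ) = (n : ℂ) := mul_right_cancel₀ hne hn'
    have hz : ((5 * n : ℤ) : ℂ) = ((1 : ℤ) : ℂ) := by push_cast; linear_combination 5 * h15.symm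
    have : (5 * n : ℤ) = 1 := by exact_mod_cast hz
    omega
  have hq : ζ ^ 4 + ζ ^ 3 + ζ ^ 2 + ζ + 1 = 0 := by
    have hfac : (ζ - 1) * (ζ ^ 4 + ζ ^ 3 + ζ ^ 2 + ζ + 1) = 0 := by linear_combination hζ5
    rcases mul_eq_zero.1 hfac with h | h
    · exact absurd (sub_eq_zero.1 h) hζne
    · exact h
  -- √5 = 1 + 2ζ + 2ζ⁴
  have h45 : ζ * ζ ^ 4 = 1 := by linear_combination hζ5
  have hnorm : ‖ζ‖ = 1 := by
    rw [hζ']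
    simp [Complex.norm_exp]
  have hconj : ζ ^ 4 = (starRingEnd ℂ) ζ :=
    (inv_eq_of_mul_eq_one_right h45).symm.trans (Complex.inv_eq_conj hnorm)
  have hre : ζ.re = Real.cos (2 * Real.pi / 5) := by
    rw [hζ']; exact Complex.exp_ofReal_mul_I_re _
  have him0 : (1 + 2 * ζ + 2 * ζ ^ 4).im = 0 := by
    rw [hconj]
    simp [Complex.add_im, Complex.mul_im, Complex.conj_im, Complex.conj_re]
    try ring
  have hwre2 : (1 + 2 * ζ + 2 * ζ ^ 4).re = 1 + 4 * ζ.re := by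
    rw [hconj]
    simp [Complex.add_re, Complex.mul_re, Complex.conj_re, Complex.conj_im]
    try ring
  have hw2 : (1 + 2 * ζ + 2 * ζ ^ 4) ^ 2 = 5 := by
    linear_combination ((-4 : ℂ) + 8 * ζ - 4 * ζ ^ 3 + 4 * ζ ^ 4) * hq
  have hwofreal : (((1 + 2 * ζ + 2 * ζ ^ 4).re : ℝ) : ℂ) = 1 + 2 * ζ + 2 * ζ ^ 4 := by
    apply Complex.ext <;> simp [him0]
  have hre5 : ((1 + 2 * ζ + 2 * ζ ^ 4).re) ^ 2 = 5 := by
    have h := hw2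
    rw [← hwofreal] at h
    exact_mod_cast h
  have hwnn : 0 ≤ (1 + 2 * ζ + 2 * ζ ^ 4).re := by
    rw [hwre2, hre]
    have hcos : 0 ≤ Real.cos (2 * Real.pi / 5) := by
      apply Real.cos_nonneg_of_mem_Icc
      constructor
      · linarith [Real.pi_pos]
      · linarith [Real.pi_pos]
    linarith
  have hs5 : (Real.sqrt 5 : ℂ) = 1 + 2 * ζ + 2 * ζ ^ 4 := by
    have h1 : Real.sqrt 5 = (1 + 2 * ζ + 2 * ζ ^ 4).re := by
      rw [← hre5]
      exact Real.sqrt_sq hwnn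
    rw [h1, hwofreal]
  -- matrix relations
  have hMS5 : MS ^ 5 = 1 := by
    apply Units.ext
    rw [Units.val_pow_eq_pow_val, Units.val_one, hMS]
    have hpow : (!![ζ, 0; 0, 1] : Matrix (Fin 2) (Fin 2) ℂ) ^ 5
        = !![ζ,0;0,1] * (!![ζ,0;0,1] * (!![ζ,0;0,1] * (!![ζ,0;0,1] * !![ζ,0;0,1]))) := by
      rw [pow_succ', pow_succ', pow_succ', pow_succ', pow_one]
    rw [hpow]
    simp only [Matrix.mul_fin_two]
    ext i j
    fin_cases i <;> fin_cases j <;> simp [Matrix.one_apply]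
    all_goals linear_combination hζ5
  have hS5 : S ^ 5 = 1 := by
    rw [hS]
    show ((QuotientGroup.mk' (Subgroup.center (GL (Fin 2) ℂ))) MS) ^ 5 = 1
    rw [← _root_.map_pow, hMS5, _root_.map_one]
  have hMT2 : ((MT ^ 2 : GL (Fin 2) ℂ) : Matrix (Fin 2) (Fin 2) ℂ)
      = ((1 + (Real.sqrt 5 : ℂ)) ^ 2 + 4) • 1 := by
    rw [Units.val_pow_eq_pow_val, hMT, FrickeIcosM.smul_one_fin_two]
    rw [pow_two]
    simp only [Matrix.mul_fin_two]
    ext i j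
    fin_cases i <;> fin_cases j <;> simp
    all_goals ring
  have hT2 : T ^ 2 = 1 := by
    rw [hT]
    show ((QuotientGroup.mk' (Subgroup.center (GL (Fin 2) ℂ))) MT) ^ 2 = 1
    rw [← _root_.map_pow]
    exact FrickeIcosM.mk_eq_one_of_scalar _ _ hMT2
  have hMST3 : (((MS * MT) ^ 3 : GL (Fin 2) ℂ) : Matrix (Fin 2) (Fin 2) ℂ)
      = (24 + 8 * ζ - 8 * ζ ^ 2 - 24 * ζ ^ 3) • 1 := by
    rw [Units.val_pow_eq_pow_val, Units.val_mul, hMS, hMT, hs5, FrickeIcosM.smul_one_fin_two]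
    have hpow : ∀ X : Matrix (Fin 2) (Fin 2) ℂ, X ^ 3 = X * (X * X) := by
      intro X; rw [pow_succ', pow_succ', pow_one]
    rw [hpow]
    simp only [Matrix.mul_fin_two]
    ext i j
    fin_cases i <;> fin_cases j <;> simp
    · linear_combination ((-24 : ℂ) + 24 * ζ - 24 * ζ ^ 4 - 16 * ζ ^ 5 + 16 * ζ ^ 6 - 24 * ζ ^ 8
        + 8 * ζ ^ 10 - 8 * ζ ^ 11) * hq
    · linear_combination ((8 : ℂ) * ζ + 8 * ζ ^ 2 - 16 * ζ ^ 3 + 8 * ζ ^ 4 + 16 * ζ ^ 5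
        - 16 * ζ ^ 6 + 8 * ζ ^ 7) * hq
    · linear_combination ((8 : ℂ) + 8 * ζ - 16 * ζ ^ 2 + 8 * ζ ^ 3 + 16 * ζ ^ 4 - 16 * ζ ^ 5
        + 8 * ζ ^ 6) * hq
    · linear_combination ((-16 : ℂ) + 48 * ζ + 8 * ζ ^ 2 - 16 * ζ ^ 3 + 24 * ζ ^ 5 - 8 * ζ ^ 7
        + 8 * ζ ^ 8) * hq
  have hST3 : (S * T) ^ 3 = 1 := by
    rw [hS, hT]
    show ((QuotientGroup.mk' (Subgroup.center (GL (Fin 2) ℂ))) MS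
        * (QuotientGroup.mk' (Subgroup.center (GL (Fin 2) ℂ))) MT) ^ 3 = 1
    rw [← _root_.map_mul, ← _root_.map_pow]
    exact FrickeIcosM.mk_eq_one_of_scalar _ _ hMST3
  have hSne : S ≠ 1 := by
    intro h
    rw [hS, QuotientGroup.eq_one_iff] at h
    set U : GL (Fin 2) ℂ :=
      ⟨!![1, 1; 0, 1], !![1, -1; 0, 1],
        by norm_num [Matrix.mul_fin_two]; exact Matrix.one_fin_two.symm,
        by norm_num [Matrix.mul_fin_two]; exact Matrix.one_fin_two.symm⟩ with hU
    have hcomm := Subgroup.mem_center_iff.1 h U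
    have hval := congrArg Units.val hcomm
    rw [Units.val_mul, Units.val_mul, hMS, hU] at hval
    simp only [Matrix.mul_fin_two] at hval
    rw [← Matrix.ext_iff] at hval
    have h01 := hval 0 1
    simp at h01
    exact hζne (by linear_combination -h01)
  exact FrickeIcos.glue S T hS5 hT2 hST3 hSne
end

section
/- Let l be a prime with l ≡ 1 or 4 (mod 5), and let a ∈ 𝔽_l satisfy a ≠ 0 and that a² − 44a − 16 is not a square in 𝔽_l. Then there exist e, u, v, u′, v′ ∈ 𝔽_l with e² + e = 1, u = e⁵·(v−1), u′ = e⁵·(v′−1), such that x⁴ + a·x³ + (11a+2)·x² − a·x + 1 = (x² + u·x + v)·(x² + u′·x + v′) in 𝔽_l[x], and both quadratic factors x²+ux+v and x²+u′x+v′ are irreducible over 𝔽_l. -/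
open Polynomial

private lemma nonsq_mul_nonsq {F : Type*} [Field F] [Fintype F] [DecidableEq F] {x y : F}
    (hx : ¬ IsSquare x) (hy : ¬ IsSquare y) : IsSquare (x * y) := by
  have hx0 : x ≠ 0 := by rintro rfl; exact hx IsSquare.zero
  have hy0 : y ≠ 0 := by rintro rfl; exact hy IsSquare.zero
  have h1 := quadraticChar_neg_one_iff_not_isSquare.mpr hx
  have h2 := quadraticChar_neg_one_iff_not_isSquare.mpr hy
  have h3 : quadraticChar F (x * y) = 1 := by rw [map_mul, h1, h2]; ring
  exact (quadraticChar_one_iff_isSquare (mul_ne_zero hx0 hy0)).mp h3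

private lemma quad_irred {F : Type*} [Field F] (u v : F)
    (h : ¬ IsSquare (u ^ 2 - 4 * v)) : Irreducible (X ^ 2 + C u * X + C v : F[X]) := by
  have hm : (X ^ 2 + C u * X + C v : F[X]).Monic := by
    have h1 : (X ^ 2 + C u * X + C v : F[X]) = X ^ 2 + (C u * X + C v) := by ring
    rw [h1]
    apply monic_X_pow_add
    have h2 : (C u * X + C v : F[X]).degree ≤ 1 := by
      apply le_trans (degree_add_le _ _)
      simp only [sup_le_iff]
      constructor
      · apply le_trans (degree_mul_le _ _)
        calc (C u).degree + (X : F[X]).degree ≤ 0 + 1 := by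
              exact add_le_add degree_C_le degree_X_le
          _ = 1 := by norm_num
      · exact le_trans degree_C_le (by norm_num)
    exact lt_of_le_of_lt h2 (by norm_num)
  have hd : (X ^ 2 + C u * X + C v : F[X]).natDegree = 2 := by
    have h1 : (X ^ 2 + C u * X + C v : F[X]) = C 1 * X ^ 2 + C u * X + C v := by
      rw [map_one, one_mul]
    rw [h1]
    exact natDegree_quadratic one_ne_zero
  by_contra hred
  obtain ⟨c₁, c₂, h0, h1⟩ := (hm.not_irreducible_iff_exists_add_mul_eq_coeff hd).mp hred
  simp only [coeff_add, coeff_X_pow, coeff_C_mul, coeff_X_zero, coeff_X_one, coeff_C] at h0 h1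
  norm_num at h0 h1
  exact h ⟨c₁ - c₂, by linear_combination (u + c₁ + c₂) * h1 - 4 * h0⟩

private lemma aux_main {l : ℕ} [Fact l.Prime] (a e eb t i2 : ZMod l) (ha : a ≠ 0)
    (hD0 : a ^ 2 - 44 * a - 16 ≠ 0)
    (he : e ^ 2 + e = 1) (hsum : e + eb = -1)
    (hi2 : (2 : ZMod l) * i2 = 1)
    (ht : a * (a + 4 * e ^ 5) = t * t)
    (hnsq : ¬ IsSquare (a * (a + 4 * eb ^ 5))) :
    ∃ u v u' v' : ZMod l,
      u = e ^ 5 * (v - 1) ∧ u' = e ^ 5 * (v' - 1) ∧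
      (X ^ 4 + C a * X ^ 3 + C (11 * a + 2) * X ^ 2 - C a * X + 1 : Polynomial (ZMod l)) =
        (X ^ 2 + C u * X + C v) * (X ^ 2 + C u' * X + C v') ∧
      Irreducible (X ^ 2 + C u * X + C v : Polynomial (ZMod l)) ∧
      Irreducible (X ^ 2 + C u' * X + C v' : Polynomial (ZMod l)) := by
  -- basic scalar facts
  have heb2 : eb ^ 2 + eb = 1 := by linear_combination he + (eb - e) * hsum
  have hprod : e * eb = -1 := by linear_combination e * hsum - he
  have hEF : e ^ 5 * eb ^ 5 = -1 := by
    rw [← mul_pow, hprod]; norm_num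
  have hE5 : e ^ 5 = 5 * e - 3 := by linear_combination (e ^ 3 - e ^ 2 + 2 * e - 3) * he
  have hF5 : eb ^ 5 = 5 * eb - 3 := by linear_combination (eb ^ 3 - eb ^ 2 + 2 * eb - 3) * heb2
  have hEFsum : e ^ 5 + eb ^ 5 = -11 := by linear_combination hE5 + hF5 + 5 * hsum
  have hE2 : (e ^ 5) ^ 2 + 11 * e ^ 5 - 1 = 0 := by
    linear_combination (e ^ 5) * hEFsum - hEF
  -- definitions
  obtain ⟨s, hs⟩ : ∃ x : ZMod l, x = 2 - a * eb ^ 5 := ⟨_, rfl⟩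
  obtain ⟨d, hd0⟩ : ∃ x : ZMod l, x = -(t * eb ^ 5) := ⟨_, rfl⟩
  obtain ⟨v, hv⟩ : ∃ x : ZMod l, x = (s + d) * i2 := ⟨_, rfl⟩
  obtain ⟨v', hv'⟩ : ∃ x : ZMod l, x = (s - d) * i2 := ⟨_, rfl⟩
  obtain ⟨u, hu⟩ : ∃ x : ZMod l, x = e ^ 5 * (v - 1) := ⟨_, rfl⟩
  obtain ⟨u', hu'⟩ : ∃ x : ZMod l, x = e ^ 5 * (v' - 1) := ⟨_, rfl⟩
  have hd2 : d ^ 2 = s ^ 2 - 4 := by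
    rw [hd0, hs]
    linear_combination (-(eb ^ 5) ^ 2) * ht + 4 * a * (eb ^ 5) * hEF
  have hsv : v + v' = s := by rw [hv, hv']; linear_combination s * hi2
  have hvv : v * v' = 1 := by
    rw [hv, hv']; linear_combination (-(i2 ^ 2)) * hd2 + (2 * i2 + 1) * hi2
  have hs2 : e ^ 5 * (s - 2) = a := by rw [hs]; linear_combination (-a) * hEF
  have h1 : u + u' = a := by rw [hu, hu']; linear_combination e ^ 5 * hsv + hs2
  have huu : u * u' = (e ^ 5) ^ 2 * (2 - s) := by
    rw [hu, hu']; linear_combination (e ^ 5) ^ 2 * hvv - (e ^ 5) ^ 2 * hsv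
  have h2c : v + v' + u * u' = 11 * a + 2 := by
    linear_combination hsv + huu + (1 - (e ^ 5) ^ 2) * hs + a * eb ^ 5 * hE2 - 11 * a * hEF
  have h3 : u * v' + u' * v = -a := by
    rw [hu, hu']; linear_combination 2 * e ^ 5 * hvv - e ^ 5 * hsv - hs2
  have hv2 : v ^ 2 = s * v - 1 := by linear_combination v * hsv - hvv
  have hv'2 : v' ^ 2 = s * v' - 1 := by linear_combination v' * hsv - hvv
  have hdisc : u ^ 2 - 4 * v = (a * e ^ 5 - 4) * v := by
    rw [hu]; linear_combination (e ^ 5) ^ 2 * hv2 + v * e ^ 5 * hs2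
  have hdisc' : u' ^ 2 - 4 * v' = (a * e ^ 5 - 4) * v' := by
    rw [hu']; linear_combination (e ^ 5) ^ 2 * hv'2 + v' * e ^ 5 * hs2
  have hv1 : (v - 1) ^ 2 = (s - 2) * v := by linear_combination hv2
  have hv'1 : (v' - 1) ^ 2 = (s - 2) * v' := by linear_combination hv'2
  have hreln : (a * e ^ 5 - 4) * (s - 2) = a * (a + 4 * eb ^ 5) := by
    linear_combination (a * e ^ 5 - 4) * hs - a ^ 2 * hEF
  have hkey : a * (a + 4 * eb ^ 5) * ((a * e ^ 5 - 4) * v) = ((a * e ^ 5 - 4) * (v - 1)) ^ 2 := by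
    linear_combination (-(a * e ^ 5 - 4) ^ 2) * hv1 - v * (a * e ^ 5 - 4) * hreln
  have hkey' : a * (a + 4 * eb ^ 5) * ((a * e ^ 5 - 4) * v') = ((a * e ^ 5 - 4) * (v' - 1)) ^ 2 := by
    linear_combination (-(a * e ^ 5 - 4) ^ 2) * hv'1 - v' * (a * e ^ 5 - 4) * hreln
  have hprod44 : (a * e ^ 5 - 4) * (a * eb ^ 5 - 4) = -(a ^ 2 - 44 * a - 16) := by
    linear_combination a ^ 2 * hEF - 4 * a * hEFsum
  have hAF : a * e ^ 5 - 4 ≠ 0 := by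
    intro h
    apply hD0
    have h4 : -(a ^ 2 - 44 * a - 16) = 0 := by rw [← hprod44, h, zero_mul]
    linear_combination -h4
  have hv0 : v ≠ 0 := left_ne_zero_of_mul_eq_one hvv
  have hv'0 : v' ≠ 0 := right_ne_zero_of_mul_eq_one hvv
  have hnsq1 : ¬ IsSquare ((a * e ^ 5 - 4) * v) := by
    rintro ⟨r, hr⟩
    have hr0 : r ≠ 0 := by
      intro h0
      exact mul_ne_zero hAF hv0 (by rw [hr, h0, mul_zero])
    apply hnsq
    refine ⟨(a * e ^ 5 - 4) * (v - 1) * r⁻¹, ?_⟩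
    have h5 : a * (a + 4 * eb ^ 5) * (r * r) = ((a * e ^ 5 - 4) * (v - 1)) ^ 2 := by
      rw [← hr]; exact hkey
    field_simp
    linear_combination h5
  have hnsq2 : ¬ IsSquare ((a * e ^ 5 - 4) * v') := by
    rintro ⟨r, hr⟩
    have hr0 : r ≠ 0 := by
      intro h0
      exact mul_ne_zero hAF hv'0 (by rw [hr, h0, mul_zero])
    apply hnsq
    refine ⟨(a * e ^ 5 - 4) * (v' - 1) * r⁻¹, ?_⟩
    have h5 : a * (a + 4 * eb ^ 5) * (r * r) = ((a * e ^ 5 - 4) * (v' - 1)) ^ 2 := by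
      rw [← hr]; exact hkey'
    field_simp
    linear_combination h5
  refine ⟨u, v, u', v', hu, hu', ?_, ?_, ?_⟩
  · calc (X ^ 4 + C a * X ^ 3 + C (11 * a + 2) * X ^ 2 - C a * X + 1 : Polynomial (ZMod l))
        = X ^ 4 + C (u + u') * X ^ 3 + C (v + v' + u * u') * X ^ 2
            + C (u * v' + u' * v) * X + C (v * v') := by
          rw [h1, h2c, h3, hvv, map_neg, map_one]; ring
      _ = (X ^ 2 + C u * X + C v) * (X ^ 2 + C u' * X + C v') := by
          simp only [C_add, C_mul]; ring
  · exact quad_irred u v (by rw [hdisc]; exact hnsq1)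
  · exact quad_irred u' v' (by rw [hdisc']; exact hnsq2)

/-- Proposition 4.2 of Morton's paper (general form): for a prime `l ≡ ±1 (mod 5)` and
`a ∈ 𝔽_l` with `a ≠ 0` and `a² − 44a − 16` a nonsquare in `𝔽_l`, the quartic
`x⁴ + ax³ + (11a+2)x² − ax + 1` splits over `𝔽_l` into two irreducible quadratics
`x² + ux + v`, `x² + u′x + v′` with `u = e⁵(v−1)` and `u′ = e⁵(v′−1)` for a root `e`
of `e² + e = 1`. -/
theorem quartic_splits_into_two_irreducible_quadratics
    (l : ℕ) (hl : Nat.Prime l) (hmod5 : l % 5 = 1 ∨ l % 5 = 4)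
    (a : ZMod l) (ha : a ≠ 0)
    (hns : ¬ IsSquare (a ^ 2 - 44 * a - 16)) :
    ∃ e u v u' v' : ZMod l,
      e ^ 2 + e = 1 ∧
      u = e ^ 5 * (v - 1) ∧
      u' = e ^ 5 * (v' - 1) ∧
      (X ^ 4 + C a * X ^ 3 + C (11 * a + 2) * X ^ 2 - C a * X + 1 : Polynomial (ZMod l)) =
        (X ^ 2 + C u * X + C v) * (X ^ 2 + C u' * X + C v') ∧
      Irreducible (X ^ 2 + C u * X + C v : Polynomial (ZMod l)) ∧
      Irreducible (X ^ 2 + C u' * X + C v' : Polynomial (ZMod l)) := by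
  haveI : Fact (Nat.Prime l) := ⟨hl⟩
  have hl2 : l ≠ 2 := by rintro rfl; rcases hmod5 with h | h <;> simp at h
  have h2ne : (2 : ZMod l) ≠ 0 := by
    have h : ((2 : ℕ) : ZMod l) ≠ 0 := by
      rw [Ne, ZMod.natCast_eq_zero_iff]
      intro hdvd
      exact hl2 ((Nat.prime_dvd_prime_iff_eq hl (by norm_num)).mp hdvd)
    exact_mod_cast h
  obtain ⟨i2, hi2⟩ : ∃ x : ZMod l, (2 : ZMod l) * x = 1 := ⟨2⁻¹, mul_inv_cancel₀ h2ne⟩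
  -- square root of 5
  haveI : Fact (Nat.Prime 5) := ⟨by norm_num⟩
  have hsq5 : IsSquare ((5 : ℕ) : ZMod l) := by
    rw [← ZMod.exists_sq_eq_prime_iff_of_mod_four_eq_one (by norm_num : 5 % 4 = 1) hl2]
    have h : ((l : ℕ) : ZMod 5) = ((l % 5 : ℕ) : ZMod 5) := (ZMod.natCast_mod l 5).symm
    rw [h]
    rcases hmod5 with h5 | h5
    · rw [h5]; exact ⟨1, by norm_num⟩
    · rw [h5]; exact ⟨2, by norm_num⟩
  obtain ⟨c, hc0⟩ := hsq5
  have hc : (5 : ZMod l) = c * c := by exact_mod_cast hc0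
  -- the two roots of e² + e = 1
  obtain ⟨e1, he1def⟩ : ∃ x : ZMod l, x = (c - 1) * i2 := ⟨_, rfl⟩
  obtain ⟨e2, he2def⟩ : ∃ x : ZMod l, x = -1 - e1 := ⟨_, rfl⟩
  have he1 : e1 ^ 2 + e1 = 1 := by
    rw [he1def]; linear_combination (-(i2 ^ 2)) * hc + ((3 - c) * i2 + 1) * hi2
  have he2 : e2 ^ 2 + e2 = 1 := by rw [he2def]; linear_combination he1
  have hsum12 : e1 + e2 = -1 := by rw [he2def]; ring
  have hsum21 : e2 + e1 = -1 := by rw [add_comm]; exact hsum12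
  have hD0 : a ^ 2 - 44 * a - 16 ≠ 0 := by
    intro h; exact hns (h ▸ IsSquare.zero)
  -- product identity
  have hprod12 : e1 * e2 = -1 := by linear_combination e1 * hsum12 - he1
  have hEF : e1 ^ 5 * e2 ^ 5 = -1 := by rw [← mul_pow, hprod12]; norm_num
  have hE5 : e1 ^ 5 = 5 * e1 - 3 := by linear_combination (e1 ^ 3 - e1 ^ 2 + 2 * e1 - 3) * he1
  have hF5 : e2 ^ 5 = 5 * e2 - 3 := by linear_combination (e2 ^ 3 - e2 ^ 2 + 2 * e2 - 3) * he2
  have hEFsum : e1 ^ 5 + e2 ^ 5 = -11 := by linear_combination hE5 + hF5 + 5 * hsum12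
  have hprodsq : (a * (a + 4 * e1 ^ 5)) * (a * (a + 4 * e2 ^ 5)) = a ^ 2 * (a ^ 2 - 44 * a - 16) := by
    linear_combination 4 * a ^ 3 * hEFsum + 16 * a ^ 2 * hEF
  have hcancel : ∀ n : ZMod l, IsSquare (a ^ 2 * n) → IsSquare n := by
    rintro n ⟨r, hr⟩
    refine ⟨r * a⁻¹, ?_⟩
    field_simp
    linear_combination hr
  by_cases hcs : IsSquare (a * (a + 4 * e1 ^ 5))
  · have hnsq2 : ¬ IsSquare (a * (a + 4 * e2 ^ 5)) := by
      intro hsq2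
      exact hns (hcancel _ (hprodsq ▸ hcs.mul hsq2))
    obtain ⟨t, ht⟩ := hcs
    obtain ⟨u, v, u', v', hu, hu', hpoly, hi1, hi2'⟩ :=
      aux_main a e1 e2 t i2 ha hD0 he1 hsum12 hi2 ht hnsq2
    exact ⟨e1, u, v, u', v', he1, hu, hu', hpoly, hi1, hi2'⟩
  · have hsq2 : IsSquare (a * (a + 4 * e2 ^ 5)) := by
      by_contra h'
      exact hns (hcancel _ (hprodsq ▸ nonsq_mul_nonsq hcs h'))
    obtain ⟨t, ht⟩ := hsq2
    have hnsq1' : ¬ IsSquare (a * (a + 4 * e1 ^ 5)) := hcs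
    obtain ⟨u, v, u', v', hu, hu', hpoly, hi1, hi2'⟩ :=
      aux_main a e2 e1 t i2 ha hD0 he2 hsum21 hi2 ht hnsq1'
    exact ⟨e2, u, v, u', v', he2, hu, hu', hpoly, hi1, hi2'⟩
end
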